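/- Let φ: A → B be a surjective homomorphism of abelian groups, C ⊆ A a subset with φ(C) = B, and (𝔭, Π') a φ-semicovering of a B-graded Lie superalgebra 𝔤 with support C. If 𝔞 is an A-graded Lie superalgebra with supp(𝔞) ⊆ C and ψ: 𝔞 → 𝔤 is a B-graded homomorphism, then there exists a unique A-graded homomorphism Ψ: 𝔞 → 𝔭 with Π' ∘ Ψ = ψ. (In particular for X ∈ 𝔞_s, Y ∈ 𝔞_t with s, t ∈ C but s+t ∉ C, both [Ψ(X),Ψ(Y)] and Ψ([X,Y]) vanish.) -/

import Mathlib

/-- The sign `(-1)^{ij}` for parities `i j : ℤ₂`, as an element of `K`. -/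
def ssign (K : Type*) [Field K] (i j : ZMod 2) : K := if i = 1 ∧ j = 1 then -1 else 1

/-- An `A`-graded Lie superalgebra over `K`, where `A` is an abelian group and the
parities are governed by a group homomorphism `δ : A → ℤ₂`: a grading `p` of the
carrier `L` by submodules whose internal direct sum is `L`, and a bilinear bracket `br`
with `[p a, p b] ⊆ p (a+b)`, super skew-symmetry and the super Jacobi identity
(signs `(-1)^{δ(a)δ(b)}`). -/
structure IsGradedLieSuperAlg (K : Type*) [Field K] {A : Type*} [AddCommGroup A]
    [DecidableEq A] {L : Type*} [AddCommGroup L] [Module K L]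
    (δ : A →+ ZMod 2) (p : A → Submodule K L) (br : L → L → L) : Prop where
  add_left : ∀ x x' y, br (x + x') y = br x y + br x' y
  smul_left : ∀ (c : K) x y, br (c • x) y = c • br x y
  add_right : ∀ x y y', br x (y + y') = br x y + br x y'
  smul_right : ∀ (c : K) x y, br x (c • y) = c • br x y
  internal : DirectSum.IsInternal p
  grade : ∀ a b, ∀ x ∈ p a, ∀ y ∈ p b, br x y ∈ p (a + b)
  skew : ∀ a b, ∀ x ∈ p a, ∀ y ∈ p b, br x y = - ssign K (δ a) (δ b) • br y x
  jacobi : ∀ a b, ∀ x ∈ p a, ∀ y ∈ p b, ∀ z,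
    br x (br y z) - ssign K (δ a) (δ b) • br y (br x z) = br (br x y) z

/-- A `φ`-semicovering with support `C` of a `B`-graded Lie superalgebra `(G, q, brg)`
along a surjective homomorphism `φ : A → B` (with `φ(C) = B`): an `A`-graded Lie
superalgebra `(P, p, brp)` with `supp(𝔭) = C`, together with a surjective linear map
`prj : P → G` which is a *partial homomorphism* (it intertwines brackets whenever
`α, β, α+β ∈ C`) and restricts to a linear bijection `p a → q (φ a)` for every `a ∈ C`. -/
structure IsSemicovering (K : Type*) [Field K] {A B : Type*} [AddCommGroup A]
    [AddCommGroup B] {P G : Type*} [AddCommGroup P] [Module K P] [AddCommGroup G]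
    [Module K G] (φ : A →+ B) (C : Set A) (p : A → Submodule K P) (brp : P → P → P)
    (q : B → Submodule K G) (brg : G → G → G) (prj : P →ₗ[K] G) : Prop where
  suppC : ∀ a : A, a ∈ C ↔ p a ≠ ⊥
  phiC : ∀ b : B, ∃ a ∈ C, φ a = b
  prj_surj : Function.Surjective prj
  partial_hom : ∀ a b : A, a ∈ C → b ∈ C → a + b ∈ C →
    ∀ x ∈ p a, ∀ y ∈ p b, prj (brp x y) = brg (prj x) (prj y)
  maps : ∀ a ∈ C, ∀ x ∈ p a, prj x ∈ q (φ a)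
  inj : ∀ a ∈ C, ∀ x ∈ p a, prj x = 0 → x = 0
  surj : ∀ a ∈ C, ∀ y ∈ q (φ a), ∃ x ∈ p a, prj x = y

namespace Stmt14

/-- Let `φ : A → B` be a surjective homomorphism of abelian groups,
`C ⊆ A` with `φ(C) = B`, and `(𝔭, Π')` a `φ`-semicovering of a `B`-graded Lie
superalgebra `𝔤` with support `C`.  If `𝔞` is an `A`-graded Lie superalgebra with
`supp(𝔞) ⊆ C` and `ψ : 𝔞 → 𝔤` is a `B`-graded homomorphism, then there exists a unique
`A`-graded homomorphism `Ψ : 𝔞 → 𝔭` with `Π' ∘ Ψ = ψ`.  (In particular, for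
`X ∈ 𝔞_s`, `Y ∈ 𝔞_t` with `s, t ∈ C` but `s + t ∉ C`, both `[Ψ(X), Ψ(Y)]` and
`Ψ([X,Y])` vanish.) -/
theorem semicovering_universal_property
    {K : Type*} [Field K] {A B : Type*} [AddCommGroup A] [AddCommGroup B]
    [DecidableEq A] [DecidableEq B]
    {P G La : Type*} [AddCommGroup P] [Module K P] [AddCommGroup G] [Module K G]
    [AddCommGroup La] [Module K La]
    (δ : B →+ ZMod 2) (φ : A →+ B) (hφ : Function.Surjective φ) (C : Set A)
    (q : B → Submodule K G) (brg : G → G → G)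
    (hg : IsGradedLieSuperAlg K δ q brg)
    (p : A → Submodule K P) (brp : P → P → P)
    (hp : IsGradedLieSuperAlg K (δ.comp φ) p brp)
    (prj : P →ₗ[K] G)
    (hcov : IsSemicovering K φ C p brp q brg prj)
    (pa : A → Submodule K La) (bra : La → La → La)
    (ha : IsGradedLieSuperAlg K (δ.comp φ) pa bra)
    (hasupp : ∀ a : A, a ∉ C → pa a = ⊥)
    (ψ : La →ₗ[K] G)
    (hψhom : ∀ x y, ψ (bra x y) = brg (ψ x) (ψ y))
    (hψgr : ∀ a : A, ∀ x ∈ pa a, ψ x ∈ q (φ a)) :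
    (∃! Ψ : La →ₗ[K] P,
      (∀ a : A, ∀ x ∈ pa a, Ψ x ∈ p a) ∧
      (∀ x y, Ψ (bra x y) = brp (Ψ x) (Ψ y)) ∧
      (∀ x, prj (Ψ x) = ψ x)) ∧
    (∀ Ψ : La →ₗ[K] P, (∀ a : A, ∀ x ∈ pa a, Ψ x ∈ p a) →
      ∀ s t : A, s ∈ C → t ∈ C → s + t ∉ C →
        ∀ x ∈ pa s, ∀ y ∈ pa t, brp (Ψ x) (Ψ y) = 0 ∧ Ψ (bra x y) = 0) := by
  classical
  -- zero behaviour of the brackets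
  have brp_zero_left : ∀ y, brp 0 y = 0 := fun y => by
    have h := hp.smul_left 0 0 y; simpa using h
  have brp_zero_right : ∀ x, brp x 0 = 0 := fun x => by
    have h := hp.smul_right 0 x 0; simpa using h
  have bra_zero_left : ∀ y, bra 0 y = 0 := fun y => by
    have h := ha.smul_left 0 0 y; simpa using h
  have bra_zero_right : ∀ x, bra x 0 = 0 := fun x => by
    have h := ha.smul_right 0 x 0; simpa using h
  have pbot : ∀ a : A, a ∉ C → p a = ⊥ := by
    intro a haC
    by_contra h
    exact haC ((hcov.suppC a).mpr h)
  have htop : ∀ x : La, x ∈ ⨆ a, pa a := fun x => by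
    rw [ha.internal.submodule_iSup_eq_top]; trivial
  -- the componentwise lift `f a : pa a →ₗ[K] P`
  have hbij : ∀ (a : A) (h : a ∈ C),
      Function.Bijective (prj.restrict (hcov.maps a h)) := by
    intro a h
    constructor
    · intro x y hxy
      have hval : prj (x : P) = prj (y : P) := congrArg Subtype.val hxy
      have hsub : prj ((x : P) - (y : P)) = 0 := by rw [map_sub, hval, sub_self]
      have := hcov.inj a h _ (sub_mem x.2 y.2) hsub
      exact Subtype.ext (sub_eq_zero.mp this)
    · rintro ⟨y, hy⟩
      obtain ⟨x, hx, hpx⟩ := hcov.surj a h y hy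
      exact ⟨⟨x, hx⟩, Subtype.ext (by simpa [LinearMap.restrict_apply] using hpx)⟩
  let f : ∀ a : A, pa a →ₗ[K] P := fun a =>
    if h : a ∈ C then
      (p a).subtype ∘ₗ
        (LinearEquiv.ofBijective (prj.restrict (hcov.maps a h)) (hbij a h)).symm.toLinearMap
          ∘ₗ ψ.restrict (hψgr a)
    else 0
  have hfmem : ∀ (a : A) (x : pa a), f a x ∈ p a := by
    intro a x
    by_cases h : a ∈ C
    · simp only [f, dif_pos h, LinearMap.coe_comp, Function.comp_apply,
        Submodule.coe_subtype]
      exact Subtype.coe_prop _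
    · simp [f, dif_neg h]
  have hfprj : ∀ (a : A) (x : pa a), prj (f a x) = ψ (x : La) := by
    intro a x
    by_cases h : a ∈ C
    · simp only [f, dif_pos h, LinearMap.coe_comp, Function.comp_apply,
        Submodule.coe_subtype]
      have key := (LinearEquiv.ofBijective (prj.restrict (hcov.maps a h))
        (hbij a h)).apply_symm_apply (ψ.restrict (hψgr a) x)
      rw [LinearEquiv.ofBijective_apply] at key
      exact congrArg Subtype.val key
    · have hx0 : (x : La) = 0 := by
        have h2 : (x : La) ∈ (⊥ : Submodule K La) := by
          rw [← hasupp a h]; exact x.2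
        simpa using h2
      simp [f, dif_neg h, hx0]
  -- assemble Ψ
  let e : (DirectSum A fun a => pa a) ≃ₗ[K] La :=
    LinearEquiv.ofBijective (DirectSum.coeLinearMap pa) ha.internal
  let Ψ : La →ₗ[K] P := (DirectSum.toModule K A P f).comp e.symm.toLinearMap
  have hsymm : ∀ (a : A) (x : La) (hx : x ∈ pa a),
      e.symm x = DirectSum.lof K A (fun a => ↥(pa a)) a (⟨x, hx⟩ : pa a) := by
    intro a x hx
    apply e.injective
    rw [LinearEquiv.apply_symm_apply]
    simp [e, DirectSum.lof_eq_of, DirectSum.coeLinearMap_of]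
    exact (DirectSum.coeLinearMap_of pa a ⟨x, hx⟩).symm
  have hΨhom : ∀ (a : A) (x : La) (hx : x ∈ pa a), Ψ x = f a ⟨x, hx⟩ := by
    intro a x hx
    simp only [Ψ, LinearMap.coe_comp, Function.comp_apply, LinearEquiv.coe_coe,
      hsymm a x hx]
    exact DirectSum.toModule_lof (R := K) (ι := A) (M := fun a => ↥(pa a)) (φ := f) a (⟨x, hx⟩ : pa a)
  have hgr : ∀ (a : A), ∀ x ∈ pa a, Ψ x ∈ p a := by
    intro a x hx
    rw [hΨhom a x hx]
    exact hfmem a ⟨x, hx⟩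
  have hprj : ∀ x, prj (Ψ x) = ψ x := by
    intro x
    refine Submodule.iSup_induction pa (motive := fun x => prj (Ψ x) = ψ x) (htop x)
      ?_ ?_ ?_
    · intro a x hx
      rw [hΨhom a x hx, hfprj a ⟨x, hx⟩]
    · simp
    · intro x y hx hy
      rw [map_add, map_add, map_add, hx, hy]
  have hbr : ∀ x y, Ψ (bra x y) = brp (Ψ x) (Ψ y) := by
    have main : ∀ s, ∀ x ∈ pa s, ∀ t, ∀ y ∈ pa t,
        Ψ (bra x y) = brp (Ψ x) (Ψ y) := by
      intro s x hx t y hy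
      by_cases hs : s ∈ C
      · by_cases ht : t ∈ C
        · by_cases hst : s + t ∈ C
          · have hxy : bra x y ∈ pa (s + t) := ha.grade s t x hx y hy
            have h1 : Ψ (bra x y) ∈ p (s + t) := hgr _ _ hxy
            have h2 : brp (Ψ x) (Ψ y) ∈ p (s + t) :=
              hp.grade s t _ (hgr s x hx) _ (hgr t y hy)
            have heq : prj (Ψ (bra x y)) = prj (brp (Ψ x) (Ψ y)) := by
              rw [hprj, hψhom, ← hprj x, ← hprj y]
              exact
                (hcov.partial_hom s t hs ht hst _ (hgr s x hx) _ (hgr t y hy)).symm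
            have hsub : Ψ (bra x y) - brp (Ψ x) (Ψ y) ∈ p (s + t) := sub_mem h1 h2
            have := hcov.inj (s + t) hst _ hsub
              (by rw [map_sub, heq, sub_self])
            exact sub_eq_zero.mp this
          · have h1 : bra x y = 0 := by
              have := ha.grade s t x hx y hy
              rw [hasupp _ hst] at this
              simpa using this
            have h2 : brp (Ψ x) (Ψ y) = 0 := by
              have := hp.grade s t _ (hgr s x hx) _ (hgr t y hy)
              rw [pbot _ hst] at this
              simpa using this
            rw [h1, h2, map_zero]
        · have hy0 : y = 0 := by
            have := hy; rw [hasupp _ ht] at this; simpa using this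
          rw [hy0, bra_zero_right, map_zero, brp_zero_right]
      · have hx0 : x = 0 := by
          have := hx; rw [hasupp _ hs] at this; simpa using this
        rw [hx0, bra_zero_left, map_zero, brp_zero_left]
    intro x
    refine Submodule.iSup_induction pa
      (motive := fun x => ∀ y, Ψ (bra x y) = brp (Ψ x) (Ψ y)) (htop x) ?_ ?_ ?_
    · intro s x hx y
      refine Submodule.iSup_induction pa
        (motive := fun y => Ψ (bra x y) = brp (Ψ x) (Ψ y)) (htop y) ?_ ?_ ?_
      · intro t y hy
        exact main s x hx t y hy
      · show Ψ (bra x 0) = brp (Ψ x) (Ψ 0)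
        rw [bra_zero_right, map_zero, brp_zero_right]
      · intro y1 y2 h1 h2
        show Ψ (bra x (y1 + y2)) = brp (Ψ x) (Ψ (y1 + y2))
        rw [ha.add_right, map_add, map_add, hp.add_right, h1, h2]
    · intro y
      show Ψ (bra 0 y) = brp (Ψ 0) (Ψ y)
      rw [bra_zero_left, map_zero, brp_zero_left]
    · intro x1 x2 h1 h2 y
      show Ψ (bra (x1 + x2) y) = brp (Ψ (x1 + x2)) (Ψ y)
      rw [ha.add_left, map_add, map_add, hp.add_left, h1 y, h2 y]
  constructor
  · refine ⟨Ψ, ⟨hgr, hbr, hprj⟩, ?_⟩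
    rintro Ψ' ⟨hgr', _, hprj'⟩
    apply LinearMap.ext
    intro x
    refine Submodule.iSup_induction pa (motive := fun x => Ψ' x = Ψ x) (htop x)
      ?_ ?_ ?_
    · intro a x hx
      by_cases h : a ∈ C
      · have hsub : Ψ' x - Ψ x ∈ p a := sub_mem (hgr' a x hx) (hgr a x hx)
        have hz : prj (Ψ' x - Ψ x) = 0 := by
          rw [map_sub, hprj' x, hprj x, sub_self]
        exact sub_eq_zero.mp (hcov.inj a h _ hsub hz)
      · have hx0 : x = 0 := by
          have := hx; rw [hasupp _ h] at this; simpa using this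
        rw [hx0, map_zero, map_zero]
    · show Ψ' (0 : La) = Ψ 0
      rw [map_zero, map_zero]
    · intro x y h1 h2
      show Ψ' (x + y) = Ψ (x + y)
      rw [map_add, map_add, h1, h2]
  · intro Ψ' hgr' s t hs ht hst x hx y hy
    constructor
    · have := hp.grade s t _ (hgr' s x hx) _ (hgr' t y hy)
      rw [pbot _ hst] at this
      simpa using this
    · have h1 : bra x y = 0 := by
        have := ha.grade s t x hx y hy
        rw [hasupp _ hst] at this
        simpa using this
      rw [h1, map_zero]
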